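/- Let Γ be a group acting on a set Z, G₁ and G₂ subgroups of Γ, and J a subgroup of G₁ ∩ G₂. Let B₁, B₂ ⊆ Z satisfy Z = B₁ ∪ B₂, set X_m = Z ∖ B_{3−m}, and assume j • B_m = B_m for every j ∈ J and, for every g ∈ G_m∖J, both g • B_m ⊆ B_{3−m} and g • X_m ⊆ X_{3−m} (m ∈ {1,2}). Define T₁ = (⋃_{g ∈ G₁∖J} g • B₁) ∪ (⋃_{g ∈ G₂∖J} g • B₂) and C₁ = Z ∖ T₁. Then for each m ∈ {1,2}: C₁ ∩ X_m = Z ∖ (⋃_{g ∈ G_{3−m}} g • B_{3−m}), and C₁ ∩ X_m is precisely invariant under G_{3−m} in the subgroup ⟨G₁, G₂⟩ generated by G₁ and G₂; that is, γ • (C₁ ∩ X_m) = C₁ ∩ X_m for every γ ∈ G_{3−m}, and γ • (C₁ ∩ X_m) ∩ (C₁ ∩ X_m) = ∅ for every γ ∈ ⟨G₁, G₂⟩ ∖ G_{3−m}. -/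
import Mathlib


open Pointwise

/-- `x` is a letter of factor `m`: it belongs to `G m` but not to `J`. -/
def NFLetter {Γ : Type*} [Group Γ] (G : Bool → Subgroup Γ) (J : Subgroup Γ)
    (m : Bool) (x : Γ) : Prop :=
  x ∈ G m ∧ x ∉ J

namespace Stmt10Aux

variable {Γ : Type*} [Group Γ]

/-- Alternating words of letters; the head of the list is the leftmost (topmost) letter. -/
inductive AltW (G : Bool → Subgroup Γ) (J : Subgroup Γ) : List (Γ × Bool) → Prop
  | single {p : Γ × Bool} (h : NFLetter G J p.2 p.1) : AltW G J [p]
  | cons {p q : Γ × Bool} {L : List (Γ × Bool)} (h : NFLetter G J p.2 p.1)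
      (ht : p.2 = !q.2) (hL : AltW G J (q :: L)) : AltW G J (p :: q :: L)

def wprod : List (Γ × Bool) → Γ := fun L => (L.map Prod.fst).prod

@[simp] lemma wprod_nil : wprod ([] : List (Γ × Bool)) = 1 := rfl

@[simp] lemma wprod_cons (p : Γ × Bool) (L : List (Γ × Bool)) :
    wprod (p :: L) = p.1 * wprod L := by
  simp [wprod]

lemma AltW.letter {G : Bool → Subgroup Γ} {J : Subgroup Γ} {p : Γ × Bool}
    {L : List (Γ × Bool)} (h : AltW G J (p :: L)) : NFLetter G J p.2 p.1 := by
  cases h with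
  | single h => exact h
  | cons h _ _ => exact h

/-- Replace the head of an alternating word by another letter of the same type. -/
lemma AltW.replaceHead {G : Bool → Subgroup Γ} {J : Subgroup Γ} {p : Γ × Bool}
    {L : List (Γ × Bool)} (h : AltW G J (p :: L)) {g : Γ}
    (hg : NFLetter G J p.2 g) : AltW G J ((g, p.2) :: L) := by
  cases h with
  | single h => exact AltW.single hg
  | cons h ht hL => exact AltW.cons hg ht hL

lemma step (G : Bool → Subgroup Γ) (J : Subgroup Γ) (hJ : ∀ m, J ≤ G m)
    {x y : Γ} {s : Bool} (hx : x ∈ G s)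
    (hy : y ∈ J ∨ ∃ L, AltW G J L ∧ wprod L = y) :
    x * y ∈ J ∨ ∃ L, AltW G J L ∧ wprod L = x * y := by
  rcases hy with hyJ | ⟨L, hL, hprod⟩
  · -- y ∈ J : x*y ∈ G s
    have hxy : x * y ∈ G s := mul_mem hx (hJ s hyJ)
    by_cases h : x * y ∈ J
    · exact Or.inl h
    · exact Or.inr ⟨[(x * y, s)], AltW.single ⟨hxy, h⟩, by simp⟩
  · subst hprod
    rcases L with _ | ⟨p, L'⟩
    · cases hL
    · have hp := hL.letter
      by_cases hst : s = p.2
      · -- same type: merge x into the head letter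
        subst hst
        by_cases hh : x * p.1 ∈ J
        · -- merged head is in J : absorb into the next letter (or finish)
          rcases L' with _ | ⟨q, L''⟩
          · left
            simpa [mul_assoc] using hh
          · cases hL with
            | cons h ht hL' =>
              right
              have hq := hL'.letter
              have hq' : NFLetter G J q.2 ((x * p.1) * q.1) := by
                refine ⟨mul_mem (hJ q.2 hh) hq.1, fun hc => hq.2 ?_⟩
                have : q.1 = (x * p.1)⁻¹ * ((x * p.1) * q.1) := by group
                rw [this]; exact mul_mem (inv_mem hh) hc
              refine ⟨((x * p.1) * q.1, q.2) :: L'', hL'.replaceHead hq', ?_⟩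
              simp [mul_assoc]
        · right
          refine ⟨(x * p.1, p.2) :: L', hL.replaceHead ⟨mul_mem hx hp.1, hh⟩, ?_⟩
          simp [mul_assoc]
      · -- different type
        by_cases hxJ : x ∈ J
        · right
          have hp' : NFLetter G J p.2 (x * p.1) := by
            refine ⟨mul_mem (hJ p.2 hxJ) hp.1, fun hc => hp.2 ?_⟩
            have : p.1 = x⁻¹ * (x * p.1) := by group
            rw [this]; exact mul_mem (inv_mem hxJ) hc
          exact ⟨(x * p.1, p.2) :: L', hL.replaceHead hp', by simp [mul_assoc]⟩
        · right
          have hs : s = !p.2 := by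
            cases s <;> cases hb : p.2 <;> simp_all
          exact ⟨(x, s) :: p :: L', AltW.cons ⟨hx, hxJ⟩ hs hL, by simp⟩

/-- every element of the join is in `J` or is represented by an alternating word. -/
lemma nf (G : Bool → Subgroup Γ) (J : Subgroup Γ) (hJ : ∀ m, J ≤ G m)
    {γ : Γ} (hγ : γ ∈ G true ⊔ G false) :
    γ ∈ J ∨ ∃ L, AltW G J L ∧ wprod L = γ := by
  have h : γ ∈ Subgroup.closure ((G true : Set Γ) ∪ (G false : Set Γ)) := by
    rw [Subgroup.closure_union, Subgroup.closure_eq, Subgroup.closure_eq]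
    exact hγ
  clear hγ
  induction h using Subgroup.closure_induction_left with
  | one => exact Or.inl J.one_mem
  | mul_left x hx y hy ih =>
    rcases hx with hx | hx
    · exact step G J hJ (s := true) hx ih
    · exact step G J hJ (s := false) hx ih
  | inv_mul_cancel x hx y hy ih =>
    rcases hx with hx | hx
    · exact step G J hJ (s := true) (inv_mem hx) ih
    · exact step G J hJ (s := false) (inv_mem hx) ih

variable {Z : Type*} [MulAction Γ Z]

/-- The ping-pong mapping lemma: an alternating word with topmost letter of type `t`
maps the complement of `⋃ g ∈ G n, g • B n` into `B (!t)`. -/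
lemma word_maps (G : Bool → Subgroup Γ) (J : Subgroup Γ) (B : Bool → Set Z)
    (hcompl : ∀ n : Bool, (B n)ᶜ ⊆ B (!n))
    (hmapB : ∀ m, ∀ g : Γ, NFLetter G J m g → g • B m ⊆ B (!m))
    (n : Bool) :
    ∀ (L : List (Γ × Bool)) (p : Γ × Bool), AltW G J (p :: L) →
      wprod (p :: L) • (⋃ g ∈ G n, g • B n)ᶜ ⊆ B (!p.2) := by
  intro L
  induction L with
  | nil =>
    intro p hp
    have hlet := hp.letter
    rintro _ ⟨z, hz, rfl⟩
    simp only [Set.mem_compl_iff, Set.mem_iUnion] at hz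
    have hz1 : z ∉ B n := fun h => hz ⟨1, one_mem _, by simpa using h⟩
    by_cases h2 : p.2 = n
    · -- letter of type n : use that z ∉ p.1⁻¹ • B n
      have hinv : z ∉ p.1⁻¹ • B n :=
        fun h => hz ⟨p.1⁻¹, inv_mem (h2 ▸ hlet.1), h⟩
      have : p.1 • z ∉ B n := by
        rwa [Set.mem_inv_smul_set_iff] at hinv
      have := hcompl n this
      rw [h2]
      simpa [wprod] using this
    · -- letter of type !n : z ∈ B (!n) = B p.2
      have hzB : z ∈ B (!n) := hcompl n hz1
      have hp2 : p.2 = !n := by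
        cases hb : p.2 <;> cases n <;> simp_all
      have : p.1 • z ∈ B (!p.2) :=
        hmapB p.2 p.1 hlet ⟨z, by rw [hp2]; exact hzB, rfl⟩
      simpa [wprod] using this
  | cons q M ih =>
    intro p hp
    cases hp with
    | cons h ht hL =>
      have ihq := ih q hL
      rw [wprod_cons, mul_smul]
      calc p.1 • (wprod (q :: M) • (⋃ g ∈ G n, g • B n)ᶜ)
          ⊆ p.1 • B (!q.2) := Set.smul_set_mono ihq
        _ = p.1 • B p.2 := by rw [ht]
        _ ⊆ B (!p.2) := hmapB p.2 p.1 h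

end Stmt10Aux

open Stmt10Aux

theorem stmt10 {Γ : Type*} [Group Γ] {Z : Type*} [MulAction Γ Z]
    (G : Bool → Subgroup Γ) (J : Subgroup Γ) (hJ : ∀ m, J ≤ G m)
    (B : Bool → Set Z) (hcover : B true ∪ B false = Set.univ)
    (X : Bool → Set Z) (hX : ∀ m, X m = (B (!m))ᶜ)
    (hinv : ∀ m, ∀ j ∈ J, j • B m = B m)
    (hmapB : ∀ m, ∀ g : Γ, NFLetter G J m g → g • B m ⊆ B (!m))
    (hmapX : ∀ m, ∀ g : Γ, NFLetter G J m g → g • X m ⊆ X (!m))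
    (T₁ : Set Z) (hT₁ : T₁ = ⋃ (m : Bool) (g : Γ) (_ : NFLetter G J m g), g • B m)
    (C₁ : Set Z) (hC₁ : C₁ = T₁ᶜ) :
    ∀ m : Bool,
      C₁ ∩ X m = (⋃ g ∈ G (!m), g • B (!m))ᶜ ∧
      (∀ γ ∈ G (!m), γ • (C₁ ∩ X m) = C₁ ∩ X m) ∧
      (∀ γ ∈ G true ⊔ G false, γ ∉ G (!m) →
        (γ • (C₁ ∩ X m)) ∩ (C₁ ∩ X m) = ∅) := by
  classical
  have hcompl : ∀ n : Bool, (B n)ᶜ ⊆ B (!n) := by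
    intro n z hz
    have hz' : z ∈ B true ∪ B false := by rw [hcover]; trivial
    cases n with
    | true => simpa using hz'.resolve_left hz
    | false => simpa using hz'.resolve_right hz
  -- S n := ⋃ g ∈ G n, g • B n
  have hBS : ∀ n : Bool, B n ⊆ ⋃ g ∈ G n, g • B n := by
    intro n z hz
    exact Set.mem_iUnion₂.2 ⟨1, one_mem _, by simpa using hz⟩
  have hgBS : ∀ n : Bool, ∀ g ∈ G n, g • B n ⊆ ⋃ g ∈ G n, g • B n := by
    intro n g hg z hz
    exact Set.mem_iUnion₂.2 ⟨g, hg, hz⟩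
  have hSfwd : ∀ n : Bool, ∀ γ ∈ G n,
      γ • (⋃ g ∈ G n, g • B n) ⊆ ⋃ g ∈ G n, g • B n := by
    rintro n γ hγ _ ⟨z, hz, rfl⟩
    obtain ⟨g, hg, hzg⟩ := Set.mem_iUnion₂.1 hz
    refine Set.mem_iUnion₂.2 ⟨γ * g, mul_mem hγ hg, ?_⟩
    rw [mul_smul]
    exact Set.smul_mem_smul_set hzg
  have hSmul : ∀ n : Bool, ∀ γ ∈ G n,
      γ • (⋃ g ∈ G n, g • B n) = ⋃ g ∈ G n, g • B n := by
    intro n γ hγ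
    refine subset_antisymm (hSfwd n γ hγ) ?_
    have h2 := hSfwd n γ⁻¹ (inv_mem hγ)
    have h3 := Set.smul_set_mono (a := γ) h2
    rwa [smul_inv_smul] at h3
  -- part 1
  have h1 : ∀ m : Bool, C₁ ∩ X m = (⋃ g ∈ G (!m), g • B (!m))ᶜ := by
    intro m
    rw [hC₁, hX m, ← Set.compl_union]
    congr 1
    apply subset_antisymm
    · rintro z hz
      rcases hz with hz | hz
      · rw [hT₁] at hz
        simp only [Set.mem_iUnion] at hz
        obtain ⟨p, g, hg, hzg⟩ := hz
        by_cases hp : p = !m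
        · exact hgBS (!m) g (hp ▸ hg.1) (hp ▸ hzg)
        · have hpm : p = m := by cases p <;> cases m <;> simp_all
          subst hpm
          have : z ∈ B (!p) := hmapB p g hg hzg
          exact hBS (!p) this
      · exact hBS (!m) hz
    · rintro z hz
      obtain ⟨g, hg, hzg⟩ := Set.mem_iUnion₂.1 hz
      by_cases hgJ : g ∈ J
      · right
        rwa [hinv (!m) g hgJ] at hzg
      · left
        rw [hT₁]
        simp only [Set.mem_iUnion]
        exact ⟨!m, g, ⟨hg, hgJ⟩, hzg⟩
  -- key disjointness
  have hdisj : ∀ n : Bool, ∀ γ ∈ G true ⊔ G false, γ ∉ G n →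
      γ • (⋃ g ∈ G n, g • B n)ᶜ ⊆ ⋃ g ∈ G n, g • B n := by
    intro n γ hγ hγn
    rcases nf G J hJ hγ with hJγ | ⟨L, hL, rfl⟩
    · exact absurd (hJ n hJγ) hγn
    · rcases L with _ | ⟨p, L'⟩
      · cases hL
      · by_cases htop : p.2 = n
        · rcases L' with _ | ⟨q, M⟩
          · -- single letter of type n : contradiction with γ ∉ G n
            exfalso
            apply hγn
            have := hL.letter.1
            rw [htop] at this
            simpa [wprod] using this
          · cases hL with
            | cons h ht hL' =>
              have hq2 : (!q.2) = n := by
                have : q.2 = !n := by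
                  cases hb : q.2 <;> cases n <;> simp_all
                rw [this, Bool.not_not]
              have hmap := word_maps G J B hcompl hmapB n M q hL'
              rw [hq2] at hmap
              rw [wprod_cons, mul_smul]
              calc p.1 • (wprod (q :: M) • (⋃ g ∈ G n, g • B n)ᶜ)
                  ⊆ p.1 • B n := Set.smul_set_mono hmap
                _ ⊆ ⋃ g ∈ G n, g • B n := hgBS n p.1 (htop ▸ h.1)
        · have hp2 : (!p.2) = n := by
            cases hb : p.2 <;> cases n <;> simp_all
          have hmap := word_maps G J B hcompl hmapB n L' p hL
          rw [hp2] at hmap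
          exact hmap.trans (hBS n)
  -- assemble
  intro m
  refine ⟨h1 m, ?_, ?_⟩
  · intro γ hγ
    rw [h1 m, Set.smul_set_compl, hSmul (!m) γ hγ]
  · intro γ hγ hγn
    rw [h1 m]
    have hd := hdisj (!m) γ hγ hγn
    apply Set.eq_empty_of_forall_notMem
    rintro x ⟨hx1, hx2⟩
    exact hx2 (hd hx1)
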